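/- Let Y = A^n_k be affine n-space over a field k with coordinate hyperplanes T_i = V(y_i). Fix q ≤ n−1, set V = T_1 ∩ ... ∩ T_q and W = T_1 ∩ ... ∩ T_{q+1}. Let f : X → Y be the blowup of Y along W. Then the strict transform of V equals the scheme-theoretic intersection of the strict transforms of T_1, ..., T_q. -/

import Mathlib

/-!
STATEMENT 9: Let `Y = 𝔸ⁿ_k` with coordinate hyperplanes `T_i = V(y_i)`, `q ≤ n-1`,
`V = T_1 ∩ ... ∩ T_q`, `W = T_1 ∩ ... ∩ T_{q+1}`, and `f : X → Y` the blowup along `W`.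
Then the strict transform of `V` equals the scheme-theoretic intersection of the strict
transforms of `T_1, ..., T_q`.

Encoding: the blowup is `X = Proj S` where `S = A[z_1,...,z_{q+1}]/(y_i z_j - y_j z_i)`
is the Rees algebra of `(y_1,...,y_{q+1})` (a regular sequence), with exceptional ideal
`E = (y_1,...,y_{q+1}) S` and irrelevant ideal `S₊ = (z_1,...,z_{q+1})`.  The strict
transform of a closed subscheme `V(J) ⊆ Y` is cut out by `J S : E^∞ = ⋃_m (J S : E^m)`,
and closed subschemes of `Proj S` agree iff the `S₊`-saturations of their defining
ideals agree.  Intersection of subschemes corresponds to the sum of ideals.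
-/

open MvPolynomial

set_option synthInstance.maxHeartbeats 800000
set_option maxHeartbeats 1600000

lemma keyA {k σ : Type*} [CommRing k] (s : Set σ) (v : σ) (hv : v ∉ s) (m : ℕ)
    (a : MvPolynomial σ k)
    (h : a * (X v) ^ m ∈ Ideal.span (MvPolynomial.X '' s : Set (MvPolynomial σ k))) :
    a ∈ Ideal.span (MvPolynomial.X '' s : Set (MvPolynomial σ k)) := by
  rw [mem_ideal_span_X_image] at h ⊢
  intro μ hμ
  have hc : coeff (μ + Finsupp.single v m) (a * (X v) ^ m) = coeff μ a := by
    rw [X_pow_eq_monomial, coeff_mul_monomial, mul_one]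
  have hsup : μ + Finsupp.single v m ∈ (a * (X v) ^ m).support := by
    rw [mem_support_iff, hc]
    exact mem_support_iff.mp hμ
  obtain ⟨i, his, hi⟩ := h _ hsup
  refine ⟨i, his, ?_⟩
  have hiv : i ≠ v := fun h => hv (h ▸ his)
  simpa [Finsupp.single_apply, hiv.symm] using hi

theorem stmt9 {k : Type*} [Field k] (n q : ℕ) (hq : q + 1 ≤ n)
    -- `S = k[y_1,...,y_n][z_1,...,z_{q+1}] / (y_i z_j - y_j z_i)`, the Rees algebra of
    -- the ideal `(y_1, ..., y_{q+1})` of `𝔸ⁿ_k`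
    (y : Fin (q + 1) → MvPolynomial (Fin n ⊕ Fin (q + 1)) k)
    (hy : y = fun i => X (Sum.inl (Fin.castLE hq i)))
    (z : Fin (q + 1) → MvPolynomial (Fin n ⊕ Fin (q + 1)) k)
    (hz : z = fun j => X (Sum.inr j))
    (Rel : Ideal (MvPolynomial (Fin n ⊕ Fin (q + 1)) k))
    (hRel : Rel = Ideal.span {f | ∃ i j : Fin (q + 1), f = y i * z j - y j * z i})
    -- the exceptional ideal `E`, the irrelevant ideal `S₊`, and the ideals of the total
    -- transforms of `V = T_1 ∩ ... ∩ T_q` and of the `T_i`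
    (E splus Jq : Ideal (MvPolynomial (Fin n ⊕ Fin (q + 1)) k ⧸ Rel))
    (Ji : Fin q → Ideal (MvPolynomial (Fin n ⊕ Fin (q + 1)) k ⧸ Rel))
    (hE : E = Ideal.span (Set.range fun i => Ideal.Quotient.mk Rel (y i)))
    (hsplus : splus = Ideal.span (Set.range fun j => Ideal.Quotient.mk Rel (z j)))
    (hJq : Jq = Ideal.span (Set.range fun i : Fin q =>
      Ideal.Quotient.mk Rel (y (Fin.castSucc i))))
    (hJi : Ji = fun i : Fin q =>
      Ideal.span {Ideal.Quotient.mk Rel (y (Fin.castSucc i))}) :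
    -- the strict transform `(Jq : E^∞)` of `V` and the intersection (= ideal sum) of the
    -- strict transforms `(Ji : E^∞)` of the `T_i` define the same closed subscheme of
    -- `X = Proj S`, i.e. they have the same `S₊`-saturation
    (⨆ ν : ℕ, (⨆ m : ℕ, Jq.colon (E ^ m : Ideal _)).colon (splus ^ ν : Ideal _)) =
      (⨆ ν : ℕ, (⨆ i : Fin q, ⨆ m : ℕ, (Ji i).colon (E ^ m : Ideal _)).colon (splus ^ ν : Ideal _)) := by
  have main : (⨆ m : ℕ, Jq.colon (E ^ m : Ideal _)) = (⨆ i : Fin q, ⨆ m : ℕ, (Ji i).colon (E ^ m : Ideal _)) := by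
    apply le_antisymm
    · -- hard direction
      set s : Set (Fin n ⊕ Fin (q + 1)) :=
        (Set.range fun i : Fin q => (Sum.inl (Fin.castLE hq i.castSucc) : Fin n ⊕ Fin (q + 1))) ∪
        (Set.range fun i : Fin q => (Sum.inr i.castSucc : Fin n ⊕ Fin (q + 1))) with hs
      set L : Ideal (MvPolynomial (Fin n ⊕ Fin (q + 1)) k) :=
        Ideal.span (MvPolynomial.X '' s) with hL
      have hYL : ∀ i : Fin (q + 1), i ≠ Fin.last q → y i ∈ L := by
        intro i hi
        obtain ⟨j, rfl⟩ := Fin.exists_castSucc_eq.mpr hi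
        rw [hy]
        exact Ideal.subset_span ⟨_, Or.inl ⟨j, rfl⟩, rfl⟩
      have hZL : ∀ i : Fin (q + 1), i ≠ Fin.last q → z i ∈ L := by
        intro i hi
        obtain ⟨j, rfl⟩ := Fin.exists_castSucc_eq.mpr hi
        rw [hz]
        exact Ideal.subset_span ⟨_, Or.inr ⟨j, rfl⟩, rfl⟩
      have hRelL : Rel ≤ L := by
        rw [hRel, Ideal.span_le]
        rintro _ ⟨i, j, rfl⟩
        by_cases hi : i = Fin.last q
        · by_cases hj : j = Fin.last q
          · subst hi; subst hj; simp
          · exact sub_mem (Ideal.mul_mem_left _ _ (hZL j hj))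
              (Ideal.mul_mem_right _ _ (hYL j hj))
        · exact sub_mem (Ideal.mul_mem_right _ _ (hYL i hi))
            (Ideal.mul_mem_left _ _ (hZL i hi))
      have hK0L : Ideal.span (Set.range fun i : Fin q => y (Fin.castSucc i)) ≤ L := by
        rw [Ideal.span_le]
        rintro _ ⟨i, rfl⟩
        exact hYL _ (Fin.castSucc_lt_last i).ne
      have hJqmap : Jq = Ideal.map (Ideal.Quotient.mk Rel)
          (Ideal.span (Set.range fun i : Fin q => y (Fin.castSucc i))) := by
        rw [hJq, Ideal.map_span, ← Set.range_comp]
        rfl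
      have hmapL : Ideal.map (Ideal.Quotient.mk Rel) L ≤
          ⨆ i : Fin q, ⨆ m : ℕ, (Ji i).colon (E ^ m : Ideal _) := by
        rw [hL, Ideal.map_span, Ideal.span_le]
        rintro _ ⟨_, ⟨w, hw, rfl⟩, rfl⟩
        rcases hw with ⟨i, rfl⟩ | ⟨i, rfl⟩
        · refine Submodule.mem_iSup_of_mem i (Submodule.mem_iSup_of_mem 0 ?_)
          refine Submodule.mem_colon.mpr fun p hp => ?_
          rw [smul_eq_mul]
          refine Ideal.mul_mem_right _ _ ?_
          simp only [hJi]
          exact Ideal.subset_span (by rw [hy]; rfl)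
        · refine Submodule.mem_iSup_of_mem i (Submodule.mem_iSup_of_mem 1 ?_)
          have hmul : E * Ideal.span {Ideal.Quotient.mk Rel (z i.castSucc)} ≤ Ji i := by
            rw [hE, Ideal.span_mul_span', Ideal.span_le]
            rintro _ ⟨_, ⟨j, rfl⟩, _, rfl, rfl⟩
            have hmk : Ideal.Quotient.mk Rel (y j * z i.castSucc) =
                Ideal.Quotient.mk Rel (y i.castSucc * z j) := by
              rw [Ideal.Quotient.eq, hRel]
              exact Ideal.subset_span ⟨j, i.castSucc, rfl⟩
            beta_reduce
            rw [← map_mul, hmk, map_mul]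
            simp only [hJi]
            exact Ideal.mul_mem_right _ _ (Ideal.subset_span rfl)
          refine Submodule.mem_colon.mpr fun p hp => ?_
          have hp : p ∈ E := by simpa using hp
          rw [smul_eq_mul, mul_comm]
          have : Ideal.Quotient.mk Rel (z i.castSucc) ∈
              Ideal.span {Ideal.Quotient.mk Rel (z i.castSucc)} := Ideal.subset_span rfl
          have := hmul (Ideal.mul_mem_mul hp this)
          rw [hz] at this
          exact this
      refine iSup_le fun m => ?_
      intro a ha
      have hsurj := Ideal.Quotient.mk_surjective (I := Rel) a
      obtain ⟨b, rfl⟩ := hsurj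
      have h1 : (Ideal.Quotient.mk Rel (y (Fin.last q))) ^ m ∈ E ^ m := by
        rw [hE]
        exact Ideal.pow_mem_pow (Ideal.subset_span (Set.mem_range_self (Fin.last q))) m
      have h2 := Submodule.mem_colon.mp ha _ h1
      rw [smul_eq_mul, ← map_pow, ← map_mul, hJqmap] at h2
      have h3 := Ideal.mem_quotient_iff_mem_sup.mp h2
      have h4 : b * (y (Fin.last q)) ^ m ∈ L := sup_le hK0L hRelL h3
      have h5 : b ∈ L := by
        rw [hy] at h4
        exact keyA s (Sum.inl (Fin.castLE hq (Fin.last q)))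
          (by
            rintro (⟨i, hi⟩ | ⟨i, hi⟩)
            · simp only [Sum.inl.injEq, Fin.ext_iff, Fin.coe_castLE, Fin.coe_castSucc,
                Fin.val_last] at hi
              exact absurd hi i.isLt.ne
            · exact absurd hi (by simp)) m b h4
      exact hmapL (Ideal.mem_map_of_mem _ h5)
    · refine iSup_le fun i => iSup_le fun m => le_trans ?_ (le_iSup _ m)
      refine Submodule.colon_mono ?_ le_rfl
      simp only [hJi, hJq]
      exact Ideal.span_le.mpr (Set.singleton_subset_iff.mpr (Ideal.subset_span ⟨i, rfl⟩))
  rw [main]
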